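/- arXiv:1401.5868 — 6 statements merged into one kernel-verified Lean document; each statement's English description precedes it below -/
import Mathlib

section
/- Let k be an integer with k > 1. Every level k-matrix with 2 columns and m rows, where m > 2k − 1, is reducible. (I.e., ℓ(2,k) ≤ 2k − 1.) -/
/-- A matrix with nonnegative integer entries is *level* if all of its column sums are equal. -/
def IsLevel {m n : ℕ} (M : Matrix (Fin m) (Fin n) ℕ) : Prop :=
  ∀ j j' : Fin n, ∑ i, M i j = ∑ i, M i j'

/-- A level matrix is *reducible* if there is a nonempty proper subset of its row indices whose
corresponding submatrix (keeping all columns) is level. -/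
def IsReducible {m n : ℕ} (M : Matrix (Fin m) (Fin n) ℕ) : Prop :=
  ∃ S : Finset (Fin m), S.Nonempty ∧ S ≠ Finset.univ ∧
    ∀ j j' : Fin n, ∑ i ∈ S, M i j = ∑ i ∈ S, M i j'


lemma greedy {α : Type*} [DecidableEq α] (f : α → ℤ) (k : ℤ) :
    ∀ (n : ℕ) (R : List α), R.length ≤ n →
      (∀ x ∈ R, -k ≤ f x ∧ f x ≤ k) →
      ∀ s : ℤ, 1 - k ≤ s → s ≤ k → s + (R.map f).sum = 0 →
      ∃ L : List α, L.Perm R ∧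
        (∀ t : ℕ, 1 - k ≤ s + ((L.map f).take t).sum ∧ s + ((L.map f).take t).sum ≤ k) ∧
        ∀ (t : ℕ) (h : t < L.length),
          (1 ≤ s + ((L.map f).take t).sum → f (L.get ⟨t, h⟩) ≤ 0) ∧
          (s + ((L.map f).take t).sum ≤ 0 → 0 ≤ f (L.get ⟨t, h⟩)) := by
  intro n
  induction n with
  | zero =>
    intro R hlen _ s h1 h2 _
    have hR : R = [] := List.length_eq_zero_iff.mp (Nat.le_zero.mp hlen)
    subst hR
    exact ⟨[], List.Perm.refl _, fun t => by simp [h1, h2], fun t h => absurd h (by simp)⟩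
  | succ n ih =>
    intro R hlen hb s h1 h2 h0
    by_cases hR0 : R = []
    · subst hR0
      exact ⟨[], List.Perm.refl _, fun t => by simp [h1, h2], fun t h => absurd h (by simp)⟩
    · have hex : ∃ x ∈ R, (1 ≤ s ∧ f x ≤ 0) ∨ (s ≤ 0 ∧ 0 ≤ f x) := by
        rcases le_or_gt 1 s with hs | hs
        · by_contra hc
          push_neg at hc
          have hpos : ∀ y ∈ R.map f, 0 ≤ y := by
            intro y hy
            obtain ⟨x, hx, rfl⟩ := List.mem_map.mp hy
            exact le_of_lt ((hc x hx).1 hs)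
          have := List.sum_nonneg hpos
          linarith
        · have hs' : s ≤ 0 := by omega
          by_contra hc
          push_neg at hc
          obtain ⟨y, R', rfl⟩ := List.exists_cons_of_ne_nil hR0
          have h1' : f y < 0 := (hc y List.mem_cons_self).2 hs'
          have h2' : (R'.map f).sum ≤ 0 := by
            have hle : ∀ z ∈ R'.map f, z ≤ (0:ℤ) := by
              intro z hz
              obtain ⟨x, hx, rfl⟩ := List.mem_map.mp hz
              exact le_of_lt ((hc x (List.mem_cons_of_mem y hx)).2 hs')
            calc (R'.map f).sum ≤ (R'.map f).length • (0:ℤ) := List.sum_le_card_nsmul _ _ hle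
              _ = 0 := by simp
          simp only [List.map_cons, List.sum_cons] at h0
          linarith
      obtain ⟨x, hxR, hcase⟩ := hex
      set R' := R.erase x with hR'
      have hperm0 : R.Perm (x :: R') := List.perm_cons_erase hxR
      have hsum0 : (R.map f).sum = f x + (R'.map f).sum := by
        have := (hperm0.map f).sum_eq
        simpa using this
      have hlen' : R'.length ≤ n := by
        have hRpos : 1 ≤ R.length := List.length_pos_iff.mpr hR0
        rw [hR', List.length_erase_of_mem hxR]
        omega
      have hbx := hb x hxR
      have hb' : ∀ z ∈ R', -k ≤ f z ∧ f z ≤ k := fun z hz => hb z (List.mem_of_mem_erase hz)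
      have hs'1 : 1 - k ≤ s + f x := by rcases hcase with ⟨ha, hb2⟩ | ⟨ha, hb2⟩ <;> linarith [hbx.1, hbx.2]
      have hs'2 : s + f x ≤ k := by rcases hcase with ⟨ha, hb2⟩ | ⟨ha, hb2⟩ <;> linarith [hbx.1, hbx.2]
      have hsum'' : (s + f x) + (R'.map f).sum = 0 := by rw [hsum0] at h0; linarith
      obtain ⟨L', hperm', hinv', hgr'⟩ := ih R' hlen' hb' (s + f x) hs'1 hs'2 hsum''
      refine ⟨x :: L', (hperm'.cons x).trans hperm0.symm, ?_, ?_⟩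
      · intro t
        cases t with
        | zero => simp only [List.take_zero, List.sum_nil, add_zero]; exact ⟨h1, h2⟩
        | succ t =>
          simp only [List.map_cons, List.take_succ_cons, List.sum_cons]
          constructor <;> [linarith [(hinv' t).1]; linarith [(hinv' t).2]]
      · intro t h
        cases t with
        | zero =>
          simp only [List.take_zero, List.sum_nil, add_zero, List.get]
          constructor
          · intro h1'
            rcases hcase with ⟨_, h'⟩ | ⟨h', _⟩
            · exact h'
            · linarith
          · intro h1'
            rcases hcase with ⟨h', _⟩ | ⟨_, h'⟩
            · linarith
            · exact h'
        | succ t =>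
          have h' : t < L'.length := by simpa using h
          simp only [List.map_cons, List.take_succ_cons, List.sum_cons, List.get]
          constructor
          · intro hh
            exact (hgr' t h').1 (by linarith)
          · intro hh
            exact (hgr' t h').2 (by linarith)


lemma zero_sum_subset (k : ℤ) (hk : 2 ≤ k) (m : ℕ) (hm : 2 * k ≤ (m : ℤ)) (d : Fin m → ℤ)
    (hd : ∀ i, -k ≤ d i ∧ d i ≤ k) (hsum : ∑ i, d i = 0) :
    ∃ S : Finset (Fin m), S.Nonempty ∧ S ≠ Finset.univ ∧ ∑ i ∈ S, d i = 0 := by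
  classical
  set R : List (Fin m) := (Finset.univ : Finset (Fin m)).toList with hR
  have hnd : R.Nodup := Finset.nodup_toList _
  have hlenR : R.length = m := by simp [hR]
  have hsumR : (R.map d).sum = 0 := by
    rw [← List.sum_toFinset d hnd]
    simp [hR, hsum]
  obtain ⟨L, hperm, hinv0, hgr0⟩ := greedy d k R.length R le_rfl (fun x _ => hd x) 0
    (by linarith) (by linarith) (by simpa using hsumR)
  have hlenL : L.length = m := by rw [hperm.length_eq, hlenR]
  have hndL : L.Nodup := hperm.nodup_iff.mpr hnd
  have hinv : ∀ t : ℕ, 1 - k ≤ ((L.map d).take t).sum ∧ ((L.map d).take t).sum ≤ k := by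
    intro t; simpa using hinv0 t
  have hgr : ∀ (t : ℕ) (h : t < L.length),
      (1 ≤ ((L.map d).take t).sum → d (L.get ⟨t, h⟩) ≤ 0) ∧
      (((L.map d).take t).sum ≤ 0 → 0 ≤ d (L.get ⟨t, h⟩)) := by
    intro t h; simpa using hgr0 t h
  have hstep : ∀ (j : ℕ) (hj : j < L.length),
      ((L.map d).take (j + 1)).sum = ((L.map d).take j).sum + d (L.get ⟨j, hj⟩) := by
    intro j hj
    have hj' : j < (L.map d).length := by simpa using hj
    rw [List.sum_take_succ _ j hj']
    congr 1
    simp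
  by_cases hA : ∃ a b : ℕ, a < b ∧ b < m ∧ ((L.map d).take a).sum = ((L.map d).take b).sum
  · obtain ⟨a, b, hab, hbm, hPab⟩ := hA
    set seg := (L.drop a).take (b - a) with hsegdef
    have hsplit : L.take b = L.take a ++ seg := by
      have hb' : b = a + (b - a) := by omega
      rw [hb', List.take_add]
    have hsegsum : (seg.map d).sum = 0 := by
      have h1 : ((L.map d).take b).sum = ((L.map d).take a).sum + (seg.map d).sum := by
        rw [← List.map_take, ← List.map_take, hsplit]
        simp
      linarith [hPab, h1]
    have hsegnd : seg.Nodup := hndL.sublist ((List.take_sublist _ _).trans (List.drop_sublist _ _))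
    have hseglen : seg.length = b - a := by
      simp only [hsegdef, List.length_take, List.length_drop, hlenL]
      omega
    have hsegne : seg ≠ [] := by
      intro h
      rw [h] at hseglen
      simp at hseglen
      omega
    refine ⟨seg.toFinset, (List.toFinset_nonempty_iff _).mpr hsegne, ?_, ?_⟩
    · intro hcon
      have hc1 : seg.toFinset.card = b - a := by
        rw [List.toFinset_card_of_nodup hsegnd, hseglen]
      rw [hcon] at hc1
      simp at hc1
      omega
    · rw [List.sum_toFinset d hsegnd]
      exact hsegsum
  · push_neg at hA
    -- injectivity of prefix sums on positions < m
    have hinj : ∀ a b : ℕ, a < m → b < m →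
        ((L.map d).take a).sum = ((L.map d).take b).sum → a = b := by
      intro a b ha hb h
      rcases lt_trichotomy a b with h' | h' | h'
      · exact absurd h (hA a b h' hb)
      · exact h'
      · exact absurd h.symm (hA b a h' ha)
    set Timg := (Finset.univ : Finset (Fin m)).image
      (fun t : Fin m => ((L.map d).take (t : ℕ)).sum) with hTimg
    have hsub : Timg ⊆ Finset.Icc (1 - k) k := by
      intro y hy
      simp only [hTimg, Finset.mem_image, Finset.mem_univ, true_and] at hy
      obtain ⟨t, rfl⟩ := hy
      exact Finset.mem_Icc.mpr ⟨(hinv _).1, (hinv _).2⟩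
    have hcardimg : Timg.card = m := by
      rw [hTimg, Finset.card_image_of_injective _ ?_, Finset.card_univ, Fintype.card_fin]
      intro t t' h
      exact Fin.ext (hinj _ _ t.isLt t'.isLt h)
    have hIcc : (Finset.Icc (1 - k) k).card = (2 * k).toNat := by
      rw [Int.card_Icc]
      congr 1
      ring
    have h2k : ((2 * k).toNat : ℤ) = 2 * k := Int.toNat_of_nonneg (by linarith)
    have hle : m ≤ (2 * k).toNat := by
      rw [← hcardimg, ← hIcc]
      exact Finset.card_le_card hsub
    have hmeq : (m : ℤ) = 2 * k := by omega
    have heq : Timg = Finset.Icc (1 - k) k := by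
      apply Finset.eq_of_subset_of_card_le hsub
      rw [hcardimg, hIcc]
      omega
    have hm4 : 4 ≤ m := by omega
    -- get positions achieving k and 1 - k
    have hkmem : k ∈ Timg := by
      rw [heq]
      exact Finset.mem_Icc.mpr ⟨by linarith, le_refl _⟩
    have h1kmem : 1 - k ∈ Timg := by
      rw [heq]
      exact Finset.mem_Icc.mpr ⟨le_refl _, by linarith⟩
    simp only [hTimg, Finset.mem_image, Finset.mem_univ, true_and] at hkmem h1kmem
    obtain ⟨t, ht⟩ := hkmem
    obtain ⟨u, hu⟩ := h1kmem
    have hP0 : ((L.map d).take 0).sum = 0 := by simp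
    -- analyze t
    have ht0 : (t : ℕ) ≠ 0 := by
      intro h
      rw [h, hP0] at ht
      linarith
    obtain ⟨t', htn⟩ : ∃ t', (t : ℕ) = t' + 1 := ⟨(t : ℕ) - 1, by omega⟩
    have ht'm : t' < m := by have := t.isLt; omega
    have ht'L : t' < L.length := by rw [hlenL]; exact ht'm
    have hPt : ((L.map d).take (t' + 1)).sum = k := by rw [← htn]; exact ht
    have hstep_t := hstep t' ht'L
    have hx1 : t' = 0 ∧ d (L.get ⟨t', ht'L⟩) = k := by
      rcases le_or_gt 1 (((L.map d).take t').sum) with hge | hlt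
      · exfalso
        have he := (hgr t' ht'L).1 hge
        have : ((L.map d).take t').sum = k := by
          have := (hinv t').2
          linarith [hstep_t, hPt]
        exact ht0 (by
          have := hinj t' (t' + 1) ht'm (htn ▸ t.isLt) (by rw [hPt, this])
          omega)
      · have hle0 : ((L.map d).take t').sum ≤ 0 := by linarith
        have he := (hgr t' ht'L).2 hle0
        have hdk := (hd (L.get ⟨t', ht'L⟩)).2
        have hPt' : ((L.map d).take t').sum = 0 := by linarith [hstep_t, hPt]
        have ht'0 : t' = 0 := by
          by_contra h
          exact h (hinj t' 0 ht'm (by omega) (by rw [hPt', hP0]))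
        exact ⟨ht'0, by linarith [hstep_t, hPt]⟩
    -- analyze u
    have hu0 : (u : ℕ) ≠ 0 := by
      intro h
      rw [h, hP0] at hu
      linarith
    obtain ⟨u', hun⟩ : ∃ u', (u : ℕ) = u' + 1 := ⟨(u : ℕ) - 1, by omega⟩
    have hu'm : u' < m := by have := u.isLt; omega
    have hu'L : u' < L.length := by rw [hlenL]; exact hu'm
    have hPu : ((L.map d).take (u' + 1)).sum = 1 - k := by rw [← hun]; exact hu
    have hstep_u := hstep u' hu'L
    have hx2 : ((L.map d).take u').sum = 1 ∧ d (L.get ⟨u', hu'L⟩) = -k := by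
      rcases le_or_gt 1 (((L.map d).take u').sum) with hge | hlt
      · have he := (hgr u' hu'L).1 hge
        have hdk := (hd (L.get ⟨u', hu'L⟩)).1
        constructor <;> linarith [hstep_u, hPu]
      · exfalso
        have hle0 : ((L.map d).take u').sum ≤ 0 := by linarith
        have he := (hgr u' hu'L).2 hle0
        have : ((L.map d).take u').sum = 1 - k := by
          have := (hinv u').1
          linarith [hstep_u, hPu]
        have := hinj u' (u' + 1) hu'm (hun ▸ u.isLt) (by rw [hPu, this])
        omega
    have hu'0 : u' ≠ 0 := by
      intro h
      have h1 := hx2.1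
      rw [h, hP0] at h1
      exact absurd h1 (by norm_num)
    -- the two-element subset
    obtain ⟨ht'0, hdx1⟩ := hx1
    set x₁ := L.get ⟨t', ht'L⟩ with hx1def
    set x₂ := L.get ⟨u', hu'L⟩ with hx2def
    have hne : x₁ ≠ x₂ := by
      intro h
      have := (hndL.get_inj_iff).mp h
      have : t' = u' := congrArg Fin.val this
      omega
    refine ⟨{x₁, x₂}, ⟨x₁, by simp⟩, ?_, ?_⟩
    · intro hcon
      have : ({x₁, x₂} : Finset (Fin m)).card = 2 := Finset.card_pair hne
      rw [hcon] at this
      simp at this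
      omega
    · rw [Finset.sum_pair hne, hdx1, hx2.2]
      ring

/-- Every level `k`-matrix with 2 columns and more than `2k - 1` rows is reducible. -/

theorem level_two_col_reducible (k m : ℕ) (hk : 1 < k) (hm : m > 2 * k - 1)
    (M : Matrix (Fin m) (Fin 2) ℕ) (hent : ∀ i j, M i j ≤ k) (hlev : IsLevel M) :
    IsReducible M := by
  have hk2 : (2 : ℤ) ≤ (k : ℤ) := by exact_mod_cast hk
  have hm2 : 2 * (k : ℤ) ≤ (m : ℤ) := by
    have : 2 * k ≤ m := by omega
    exact_mod_cast this
  set d : Fin m → ℤ := fun i => (M i 0 : ℤ) - (M i 1 : ℤ) with hd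
  have hbd : ∀ i, -(k : ℤ) ≤ d i ∧ d i ≤ k := by
    intro i
    have h0 : (M i 0 : ℤ) ≤ k := by exact_mod_cast hent i 0
    have h1 : (M i 1 : ℤ) ≤ k := by exact_mod_cast hent i 1
    have h0' : (0 : ℤ) ≤ (M i 0 : ℤ) := Int.natCast_nonneg _
    have h1' : (0 : ℤ) ≤ (M i 1 : ℤ) := Int.natCast_nonneg _
    constructor <;> simp only [hd] <;> linarith
  have hsum : ∑ i, d i = 0 := by
    simp only [hd, Finset.sum_sub_distrib]
    rw [sub_eq_zero]
    exact_mod_cast hlev 0 1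
  obtain ⟨S, hSne, hSu, hS0⟩ := zero_sum_subset (k : ℤ) hk2 m hm2 d hbd hsum
  refine ⟨S, hSne, hSu, ?_⟩
  have key : ∑ i ∈ S, M i 0 = ∑ i ∈ S, M i 1 := by
    have h : (∑ i ∈ S, (M i 0 : ℤ)) = ∑ i ∈ S, (M i 1 : ℤ) := by
      rw [← sub_eq_zero, ← Finset.sum_sub_distrib]
      exact hS0
    exact_mod_cast h
  intro j j'
  fin_cases j <;> fin_cases j' <;> simp [key]
end

section
/- For every integer k > 1 there exists an irreducible level k-matrix with 2 columns and exactly 2k − 1 rows. (Together with the reducibility bound, this shows ℓ(2,k) = 2k − 1.) -/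
/-- A level matrix is *irreducible* if it is level and not reducible. -/
def IsIrred {m n : ℕ} (M : Matrix (Fin m) (Fin n) ℕ) : Prop :=
  IsLevel M ∧ ¬ IsReducible M


lemma card_filter_lt_univ (n m : ℕ) (h : m ≤ n) :
    (Finset.univ.filter fun i : Fin n => (i:ℕ) < m).card = m := by
  rw [Finset.card_filter]
  rw [Fin.sum_univ_eq_sum_range (fun i => if i < m then 1 else 0)]
  rw [← Finset.card_filter]
  rw [show (Finset.range n).filter (fun i => i < m) = Finset.range m by
    ext x; simp only [Finset.mem_filter, Finset.mem_range]; omega]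
  exact Finset.card_range m

lemma coprime_pred (k : ℕ) (hk : 1 < k) : Nat.Coprime k (k - 1) := by
  obtain ⟨n, rfl⟩ : ∃ n, k = n + 1 := ⟨k - 1, by omega⟩
  rw [Nat.add_sub_cancel]
  unfold Nat.Coprime
  rw [Nat.add_comm n 1, Nat.gcd_add_self_left]
  exact Nat.gcd_one_left _

/-- For every integer `k > 1` there exists an irreducible level `k`-matrix with 2 columns and
exactly `2k - 1` rows. -/
theorem exists_irreducible_two_col (k : ℕ) (hk : 1 < k) :
    ∃ M : Matrix (Fin (2 * k - 1)) (Fin 2) ℕ,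
      (∀ i j, M i j ≤ k) ∧ IsIrred M := by
  set p : Fin (2 * k - 1) → Prop := fun i => (i : ℕ) < k - 1 with hp
  set M : Matrix (Fin (2 * k - 1)) (Fin 2) ℕ :=
    fun i j => if (i : ℕ) < k - 1 then (if j = 0 then k else 0)
      else (if j = 0 then 0 else k - 1) with hM
  have m0 : ∀ i, M i 0 = if p i then k else 0 := by
    intro i; simp only [hM, hp]; norm_num
  have m1 : ∀ i, M i 1 = if p i then 0 else k - 1 := by
    intro i; simp only [hM, hp]; norm_num
  have hs0 : ∀ S : Finset (Fin (2 * k - 1)),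
      ∑ i ∈ S, M i 0 = (S.filter p).card * k := by
    intro S
    have e : ∑ i ∈ S, M i 0 = ∑ i ∈ S.filter p, k := by
      rw [Finset.sum_filter]
      exact Finset.sum_congr rfl (fun i _ => m0 i)
    rw [e, Finset.sum_const, smul_eq_mul]
  have hs1 : ∀ S : Finset (Fin (2 * k - 1)),
      ∑ i ∈ S, M i 1 = (S.filter fun i => ¬ p i).card * (k - 1) := by
    intro S
    have e : ∑ i ∈ S, M i 1 = ∑ i ∈ S.filter (fun i => ¬ p i), (k - 1) := by
      rw [Finset.sum_filter]
      refine Finset.sum_congr rfl (fun i _ => ?_)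
      rw [m1 i, ite_not]
    rw [e, Finset.sum_const, smul_eq_mul]
  have hcard0 : (Finset.univ.filter p).card = k - 1 :=
    card_filter_lt_univ _ _ (by omega)
  have hcard1 : (Finset.univ.filter fun i => ¬ p i).card = k := by
    have := Finset.card_filter_add_card_filter_not
      (s := (Finset.univ : Finset (Fin (2 * k - 1)))) (p := p)
    rw [hcard0, Finset.card_univ, Fintype.card_fin] at this
    omega
  have key : ∀ S : Finset (Fin (2 * k - 1)),
      (∑ i ∈ S, M i 0 = ∑ i ∈ S, M i 1) →
      (S.card = 0 ∨ S.card = 2 * k - 1) := by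
    intro S h
    rw [hs0, hs1] at h
    set a := (S.filter p).card with ha
    set b := (S.filter fun i => ¬ p i).card with hb
    have hab : a + b = S.card := Finset.card_filter_add_card_filter_not (p := p)
    have haa : a ≤ k - 1 := hcard0 ▸ Finset.card_le_card
      (Finset.filter_subset_filter p (Finset.subset_univ S))
    have hbb : b ≤ k := hcard1 ▸ Finset.card_le_card
      (Finset.filter_subset_filter _ (Finset.subset_univ S))
    have hdvd : k ∣ b :=
      (coprime_pred k hk).dvd_of_dvd_mul_right ⟨a, by rw [← h]; ring⟩
    obtain ⟨c, hbc⟩ := hdvd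
    have hc : c ≤ 1 := by
      by_contra hcc
      push_neg at hcc
      nlinarith
    interval_cases c
    · left
      have hb0 : b = 0 := by omega
      rw [hb0, Nat.zero_mul] at h
      rcases Nat.mul_eq_zero.mp h with h' | h' <;> omega
    · right
      have hbk : b = k := by omega
      have h2 : a * k = (k - 1) * k := by
        rw [h, hbk]; ring
      have : a = k - 1 := Nat.eq_of_mul_eq_mul_right (by omega) h2
      omega
  refine ⟨M, ?_, ?_, ?_⟩
  · intro i j
    rw [hM]
    dsimp only
    split_ifs <;> omega
  · intro j j'
    have h0 : ∑ i, M i 0 = (k - 1) * k := by rw [hs0, hcard0]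
    have h1 : ∑ i, M i 1 = (k - 1) * k := by rw [hs1, hcard1]; ring
    fin_cases j <;> fin_cases j' <;>
      first
        | rfl
        | exact h0.trans h1.symm
        | exact h1.trans h0.symm
  · rintro ⟨S, hne, hnuniv, hlev⟩
    rcases key S (hlev 0 1) with h | h
    · exact absurd (Finset.card_eq_zero.mp h) (Finset.nonempty_iff_ne_empty.mp hne)
    · apply hnuniv
      apply Finset.eq_univ_of_card
      rw [h, Fintype.card_fin]
end

section
/- Let n ≥ 1 and k ≥ 1 be integers, let A be an invertible n×n matrix with integer entries in {0,1,…,k}, and let x ∈ ℚ^n satisfy Aᵀx = 𝟙 (the all-ones vector) with x_i ≥ 0 for all i. Let r be the least positive integer such that r·x has all integer entries. Then the only vectors y ∈ ℤ^n satisfying 0 ≤ y ≤ r·x componentwise and Aᵀy = t·𝟙 for some t ∈ ℤ are y = 0 and y = r·x. (Equivalently, the level matrix L(A, r, x) formed by stacking r·x_i copies of row i of A for each i is irreducible.) -/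
/-- Let `A` be an invertible `n × n` integer matrix with entries in `{0, …, k}`, let
`x ∈ ℚ^n` be nonnegative with `Aᵀx = 𝟙`, and let `r` be the least positive integer such that
`r·x` is integral.  Then the only integer vectors `y` with `0 ≤ y ≤ r·x` and `Aᵀy = t·𝟙` for
some integer `t` are `y = 0` and `y = r·x`.  (Equivalently, `L(A, r, x)` is irreducible.) -/
theorem level_matrix_from_bfs_irreducible (n k : ℕ) (hn : 1 ≤ n) (hk : 1 ≤ k)
    (A : Matrix (Fin n) (Fin n) ℤ) (hdet : A.det ≠ 0)
    (hent : ∀ i j, 0 ≤ A i j ∧ A i j ≤ (k : ℤ))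
    (x : Fin n → ℚ) (hxpos : ∀ i, 0 ≤ x i)
    (hx : ∀ j : Fin n, ∑ i, (A i j : ℚ) * x i = 1)
    (r : ℕ) (hr : 0 < r) (hrx : ∀ i, ∃ z : ℤ, (r : ℚ) * x i = (z : ℚ))
    (hrmin : ∀ s : ℕ, 0 < s → (∀ i, ∃ z : ℤ, (s : ℚ) * x i = (z : ℚ)) → r ≤ s)
    (y : Fin n → ℤ) (hy0 : ∀ i, 0 ≤ y i) (hyx : ∀ i, (y i : ℚ) ≤ (r : ℚ) * x i)
    (t : ℤ) (hyt : ∀ j : Fin n, ∑ i, A i j * y i = t) :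
    (∀ i, y i = 0) ∨ (∀ i, (y i : ℚ) = (r : ℚ) * x i) := by
  set A' : Matrix (Fin n) (Fin n) ℚ := A.map (Int.cast : ℤ → ℚ) with hA'
  have hdet' : A'.det ≠ 0 := by
    have h : A'.det = (A.det : ℚ) := by
      have := (RingHom.map_det (Int.castRingHom ℚ) A).symm
      simpa [RingHom.mapMatrix_apply, hA'] using this
    rw [h]
    exact_mod_cast fun h => hdet (by exact_mod_cast h)
  have hunit : IsUnit A' := (Matrix.isUnit_iff_isUnit_det _).mpr (isUnit_iff_ne_zero.mpr hdet')
  -- injectivity of z ↦ z ᵥ* A'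
  have hinj : ∀ u v : Fin n → ℚ, Matrix.vecMul u A' = Matrix.vecMul v A' → u = v := by
    intro u v huv
    have h2 : Matrix.vecMul (Matrix.vecMul u A') A'⁻¹ = Matrix.vecMul (Matrix.vecMul v A') A'⁻¹ := by rw [huv]
    rwa [Matrix.vecMul_vecMul, Matrix.vecMul_vecMul, Matrix.mul_nonsing_inv _ (isUnit_iff_ne_zero.mpr hdet'),
      Matrix.vecMul_one, Matrix.vecMul_one] at h2
  -- key: y = t • x over ℚ
  have key : ∀ i, (y i : ℚ) = (t : ℚ) * x i := by
    have h1 : Matrix.vecMul (fun i => (y i : ℚ)) A' = Matrix.vecMul (fun i => (t : ℚ) * x i) A' := by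
      funext j
      simp only [Matrix.vecMul, dotProduct, hA', Matrix.map_apply]
      have hl : ∑ i, (y i : ℚ) * (A i j : ℚ) = (t : ℚ) := by
        push_cast [← hyt j]
        exact Finset.sum_congr rfl fun i _ => mul_comm _ _
      have hrt : ∑ i, (t : ℚ) * x i * (A i j : ℚ) = (t : ℚ) := by
        rw [show ∑ i, (t : ℚ) * x i * (A i j : ℚ) = (t : ℚ) * ∑ i, (A i j : ℚ) * x i by
          rw [Finset.mul_sum]; exact Finset.sum_congr rfl fun i _ => by ring, hx j, mul_one]
      rw [hl, hrt]
    have := hinj _ _ h1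
    exact fun i => congrFun this i
  -- there is an index with x i > 0
  obtain ⟨i₀, hi₀⟩ : ∃ i, 0 < x i := by
    by_contra h
    push_neg at h
    have hz : ∀ i, x i = 0 := fun i => le_antisymm (h i) (hxpos i)
    have := hx ⟨0, hn⟩
    simp [hz] at this
  rcases le_or_gt t 0 with ht | ht
  · left
    intro i
    have h1 : (y i : ℚ) ≤ 0 := by
      rw [key i]
      exact mul_nonpos_of_nonpos_of_nonneg (by exact_mod_cast ht) (hxpos i)
    have h2 : (0 : ℚ) ≤ (y i : ℚ) := by exact_mod_cast hy0 i
    exact_mod_cast le_antisymm h1 h2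
  · right
    -- minimality: r ≤ t
    have hint : ∀ i, ∃ z : ℤ, (t.toNat : ℚ) * x i = (z : ℚ) := by
      intro i
      refine ⟨y i, ?_⟩
      rw [key i]
      congr 1
      exact_mod_cast congrArg (Int.cast : ℤ → ℚ) (Int.toNat_of_nonneg ht.le)
    have hrt : r ≤ t.toNat := hrmin t.toNat (by omega) hint
    have hrt' : (r : ℚ) ≤ (t : ℚ) := by
      have : (r : ℤ) ≤ t := by omega
      exact_mod_cast this
    -- upper bound: t ≤ r, from y i₀ ≤ r x i₀
    have htr : (t : ℚ) ≤ (r : ℚ) := by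
      have := hyx i₀
      rw [key i₀] at this
      exact le_of_mul_le_mul_right (by linarith) hi₀
    have hteq : (t : ℚ) = (r : ℚ) := le_antisymm htr hrt'
    intro i
    rw [key i, hteq]
end

section
/- Let n > 1 and k ≥ 1 be integers, let A be an invertible n×n matrix with integer entries in {0,1,…,k}, and let y ∈ ℚ^n satisfy Aᵀy = 𝟙 with y_i ≥ 0 for all i. Let r be the least positive integer such that r·y has all integer entries. Then, as real numbers, r·(y_1 + ⋯ + y_n) ≤ (k/2)^{n−1}·(n+1)^{(n+1)/2}. (Equivalently, the irreducible level matrix L(A, r, y) has at most (k/2)^{n−1}(n+1)^{(n+1)/2} rows.) -/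
open Matrix Finset

lemma det_sq_le_pow_card {m : Type*} [Fintype m] [DecidableEq m] (M : Matrix m m ℝ) (c : ℝ)
    (h : ∀ j, ∑ i, (M i j)^2 ≤ c) :
    M.det ^ 2 ≤ c ^ (Fintype.card m) := by
  rcases isEmpty_or_nonempty m with hm | hm
  · simp [Matrix.det_isEmpty, Fintype.card_eq_zero]
  set N := Fintype.card m with hN
  have hN0 : 0 < N := Fintype.card_pos
  set G := Mᴴ * M with hG
  have hpsd : G.PosSemidef := posSemidef_conjTranspose_mul_self M
  have hherm := hpsd.isHermitian
  have hdet : G.det = M.det ^ 2 := by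
    rw [hG, det_mul, det_conjTranspose, star_trivial, sq]
  have hev : G.det = ∏ i, hherm.eigenvalues i := by
    simpa using hherm.det_eq_prod_eigenvalues
  have hev0 : ∀ i, 0 ≤ hherm.eigenvalues i := hpsd.eigenvalues_nonneg
  have htr : G.trace = ∑ i, hherm.eigenvalues i := by
    simpa using hherm.trace_eq_sum_eigenvalues
  have hGd : ∀ j, G j j ≤ c := by
    intro j
    calc G j j = ∑ i, (M i j)^2 := by
          simp [hG, Matrix.mul_apply, conjTranspose_apply, sq]
      _ ≤ c := h j
  have htrace_le : G.trace ≤ N * c := by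
    rw [Matrix.trace]
    calc ∑ j, G.diag j ≤ ∑ _j : m, c := Finset.sum_le_sum (fun j _ => hGd j)
      _ = N * c := by simp [mul_comm, hN]
  have amgm : ∏ i, hherm.eigenvalues i ≤ c ^ N := by
    have h1 : ∏ i, (hherm.eigenvalues i) ^ ((N:ℝ)⁻¹) ≤ ∑ i, (N:ℝ)⁻¹ * hherm.eigenvalues i := by
      apply Real.geom_mean_le_arith_mean_weighted
      · intro i _; positivity
      · simp [Finset.sum_const, hN]
      · intro i _; exact hev0 i
    have h2 : ∑ i, (N:ℝ)⁻¹ * hherm.eigenvalues i ≤ c := by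
      rw [← Finset.mul_sum, ← htr]
      calc (N:ℝ)⁻¹ * G.trace ≤ (N:ℝ)⁻¹ * (N * c) := by
            apply mul_le_mul_of_nonneg_left htrace_le (by positivity)
        _ = c := by field_simp
    have h3 : ∏ i, hherm.eigenvalues i = (∏ i, (hherm.eigenvalues i) ^ ((N:ℝ)⁻¹)) ^ N := by
      rw [← Finset.prod_pow]
      apply Finset.prod_congr rfl
      intro i _
      rw [← Real.rpow_natCast ((hherm.eigenvalues i) ^ ((N:ℝ)⁻¹)) N, ← Real.rpow_mul (hev0 i),
        inv_mul_cancel₀ (by exact_mod_cast hN0.ne'), Real.rpow_one]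
    rw [h3]
    exact pow_le_pow_left₀ (Finset.prod_nonneg fun i _ => Real.rpow_nonneg (hev0 i) _)
      (le_trans h1 h2) N
  calc M.det ^ 2 = ∏ i, hherm.eigenvalues i := by rw [← hdet, hev]
    _ ≤ c ^ N := amgm

/-- Let `A` be an invertible `n × n` integer matrix (`n > 1`) with entries in `{0, …, k}`, let
`y ∈ ℚ^n` be nonnegative with `Aᵀy = 𝟙`, and let `r` be the least positive integer such that
`r·y` is integral.  Then `r·(y₁ + ⋯ + yₙ) ≤ (k/2)^(n-1)·(n+1)^((n+1)/2)`, i.e. the irreducible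
level matrix `L(A, r, y)` has at most `(k/2)^(n-1)·(n+1)^((n+1)/2)` rows. -/
theorem rows_of_L_le (n k : ℕ) (hn : 1 < n) (hk : 1 ≤ k)
    (A : Matrix (Fin n) (Fin n) ℤ) (hdet : A.det ≠ 0)
    (hent : ∀ i j, 0 ≤ A i j ∧ A i j ≤ (k : ℤ))
    (y : Fin n → ℚ) (hypos : ∀ i, 0 ≤ y i)
    (hy : ∀ j : Fin n, ∑ i, (A i j : ℚ) * y i = 1)
    (r : ℕ) (hr : 0 < r) (hry : ∀ i, ∃ z : ℤ, (r : ℚ) * y i = (z : ℚ))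
    (hrmin : ∀ s : ℕ, 0 < s → (∀ i, ∃ z : ℤ, (s : ℚ) * y i = (z : ℚ)) → r ≤ s) :
    (r : ℝ) * ∑ i, (y i : ℝ) ≤ ((k : ℝ) / 2) ^ (n - 1) * ((n : ℝ) + 1) ^ (((n : ℝ) + 1) / 2) := by
  set d : ℤ := A.det with hd
  -- Step 1 : r ≤ |det A|
  have hstep1 : r ≤ d.natAbs := by
    apply hrmin _ (Int.natAbs_pos.mpr hdet)
    -- Cramer : d • y is integral
    set M : Matrix (Fin n) (Fin n) ℚ := A.map ((↑) : ℤ → ℚ) with hM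
    have hMdet : M.det = (d : ℚ) := by
      rw [hM, hd]; exact (RingHom.map_det (Int.castRingHom ℚ) A).symm
    have hyv : Mᵀ *ᵥ y = fun _ => 1 := by
      funext j
      simpa [Matrix.mulVec, dotProduct, hM] using hy j
    have hadj : ∀ i, (d : ℚ) * y i = ((∑ j, (Aᵀ).adjugate i j : ℤ) : ℚ) := by
      intro i
      have h1 : (Mᵀ).adjugate *ᵥ (Mᵀ *ᵥ y) = M.det • y := by
        rw [Matrix.mulVec_mulVec, Matrix.adjugate_mul, Matrix.smul_mulVec,
          Matrix.one_mulVec, Matrix.det_transpose]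
      have h2 : (Mᵀ).adjugate = ((Aᵀ).adjugate).map ((↑) : ℤ → ℚ) := by
        rw [hM, ← Matrix.transpose_map]
        exact ((Int.castRingHom ℚ).map_adjugate Aᵀ).symm
      have h3 := congrFun h1 i
      rw [hyv, h2] at h3
      simp only [Matrix.mulVec, dotProduct, Matrix.map_apply, mul_one,
        Pi.smul_apply, smul_eq_mul, hMdet] at h3
      rw [← h3]
      push_cast
      rfl
    intro i
    obtain ⟨Z, hZ⟩ : ∃ z : ℤ, (d : ℚ) * y i = (z : ℚ) := ⟨_, hadj i⟩
    rcases Int.natAbs_eq d with h | h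
    · refine ⟨Z, ?_⟩
      have hc : ((d.natAbs : ℕ) : ℚ) = (d : ℚ) := by
        rw [← Int.cast_natCast (R := ℚ), ← h]
      rw [hc, hZ]
    · refine ⟨-Z, ?_⟩
      have h' : ((d.natAbs : ℕ) : ℤ) = -d := by omega
      have hc : ((d.natAbs : ℕ) : ℚ) = -(d : ℚ) := by
        rw [← Int.cast_natCast (R := ℚ), h', Int.cast_neg]
      rw [hc]
      push_cast
      rw [neg_mul, hZ]
  -- Step 2 : real setting, bordered matrix
  set S : ℝ := ∑ i, (y i : ℝ) with hSdef
  have hS0 : 0 ≤ S := Finset.sum_nonneg fun i _ => by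
    have := hypos i; positivity
  set AR : Matrix (Fin n) (Fin n) ℝ := A.map ((↑) : ℤ → ℝ) with hAR
  have hARdet : AR.det = (d : ℝ) := by
    rw [hAR, hd]; exact (RingHom.map_det (Int.castRingHom ℝ) A).symm
  have hARTdet : (ARᵀ).det = (d : ℝ) := by rw [Matrix.det_transpose, hARdet]
  have hdR : (d : ℝ) ≠ 0 := Int.cast_ne_zero.mpr hdet
  have hUnit : IsUnit (ARᵀ).det := by rw [hARTdet]; exact isUnit_iff_ne_zero.mpr hdR
  haveI : Invertible (ARᵀ) := (ARᵀ).invertibleOfIsUnitDet hUnit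
  have hyR : ARᵀ *ᵥ (fun i => (y i : ℝ)) = fun _ => 1 := by
    funext j
    have := congrArg (Rat.cast (K := ℝ)) (hy j)
    push_cast at this
    simpa [Matrix.mulVec, dotProduct, hAR] using this
  have hInv1 : (ARᵀ)⁻¹ *ᵥ (fun _ => (1:ℝ)) = fun i => (y i : ℝ) := by
    rw [← hyR, Matrix.mulVec_mulVec, Matrix.nonsing_inv_mul _ hUnit, Matrix.one_mulVec]
  set B : Matrix (Fin n ⊕ Unit) (Fin n ⊕ Unit) ℝ :=
    Matrix.fromBlocks ARᵀ (Matrix.of fun _ _ => 1) (Matrix.of fun _ _ => 1) 0 with hB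
  have hBdet : B.det = (d : ℝ) * (-S) := by
    rw [hB, Matrix.det_fromBlocks₁₁, hARTdet, Matrix.det_unique, Matrix.invOf_eq_nonsing_inv]
    congr 1
    have hcol : ∀ j, (y j : ℝ) = ∑ i, (ARᵀ)⁻¹ j i := by
      intro j
      rw [← congrFun hInv1 j]
      simp [Matrix.mulVec, dotProduct]
    simp only [Matrix.sub_apply, Matrix.zero_apply, zero_sub, neg_inj, Matrix.mul_apply,
      Matrix.of_apply, one_mul, mul_one]
    rw [Finset.sum_comm, hSdef]
    exact (Finset.sum_congr rfl fun j _ => (hcol j)).symm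
  -- Step 3 : scaled and centered matrix C
  set kh : ℝ := (k : ℝ) / 2 with hkh
  have hkh0 : 0 < kh := by
    rw [hkh]
    have : (1:ℝ) ≤ (k:ℝ) := by exact_mod_cast hk
    linarith
  set E : Matrix (Fin n ⊕ Unit) (Fin n ⊕ Unit) ℝ :=
    Matrix.fromBlocks 1 0 0 (kh • (1 : Matrix Unit Unit ℝ)) with hE
  set F : Matrix (Fin n ⊕ Unit) (Fin n ⊕ Unit) ℝ :=
    Matrix.fromBlocks 1 0 (Matrix.of fun _ _ => -kh) (kh • (1 : Matrix Unit Unit ℝ)) with hF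
  set C : Matrix (Fin n ⊕ Unit) (Fin n ⊕ Unit) ℝ := E * (B * F) with hC
  have hdetE : E.det = kh := by
    rw [hE, Matrix.det_fromBlocks_zero₂₁, Matrix.det_one, one_mul, Matrix.det_unique]
    simp
  have hdetF : F.det = kh := by
    rw [hF, Matrix.det_fromBlocks_zero₁₂, Matrix.det_one, one_mul, Matrix.det_unique]
    simp
  have hCdet : C.det = kh ^ 2 * ((d : ℝ) * (-S)) := by
    rw [hC, Matrix.det_mul, Matrix.det_mul, hdetE, hdetF, hBdet]
    ring
  have hCentries : C = Matrix.fromBlocks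
      (Matrix.of fun i j => (A j i : ℝ) - kh) (Matrix.of fun _ _ => kh)
      (Matrix.of fun _ _ => kh) 0 := by
    rw [hC, hB, hE, hF, Matrix.fromBlocks_multiply, Matrix.fromBlocks_multiply]
    ext i j
    rcases i with i | i <;> rcases j with j | j <;>
      simp [Matrix.mul_apply, Fintype.sum_sum_type, hAR, Matrix.one_apply, mul_comm,
        Matrix.map_apply, sub_eq_add_neg]
  -- Step 4 : column norm bound
  have hcolbound : ∀ j, ∑ i, (C i j)^2 ≤ ((n : ℝ) + 1) * kh ^ 2 := by
    intro j
    have hsq : ∀ (a b : Fin n), ((A a b : ℝ) - kh)^2 ≤ kh^2 := by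
      intro a b
      have h1 : (0:ℝ) ≤ (A a b : ℝ) := by exact_mod_cast (hent a b).1
      have h2 : (A a b : ℝ) ≤ (k:ℝ) := by exact_mod_cast (hent a b).2
      have : |(A a b : ℝ) - kh| ≤ |kh| := by
        rw [abs_of_pos hkh0, abs_le, hkh]
        constructor <;> [linarith; linarith]
      calc ((A a b : ℝ) - kh)^2 ≤ |kh|^2 := by
            rw [← sq_abs]
            exact pow_le_pow_left₀ (abs_nonneg _) this 2
        _ = kh^2 := by rw [sq_abs]
    rw [hCentries]
    cases j with
    | inl j =>
      rw [Fintype.sum_sum_type]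
      simp only [Matrix.fromBlocks_apply₁₁, Matrix.fromBlocks_apply₂₁, Matrix.of_apply]
      calc (∑ i : Fin n, ((A j i : ℝ) - kh)^2) + ∑ _u : Unit, kh^2
          ≤ (∑ _i : Fin n, kh^2) + ∑ _u : Unit, kh^2 := by
            apply add_le_add_left
            exact Finset.sum_le_sum fun i _ => hsq j i
        _ = ((n : ℝ) + 1) * kh^2 := by
            simp [Finset.sum_const]
            ring
    | inr u =>
      rw [Fintype.sum_sum_type]
      simp only [Matrix.fromBlocks_apply₁₂, Matrix.fromBlocks_apply₂₂, Matrix.of_apply,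
        Matrix.zero_apply]
      have : (∑ _i : Fin n, kh^2) + ∑ _u : Unit, (0:ℝ)^2 = (n:ℝ) * kh^2 := by
        simp [Finset.sum_const]
      rw [this]
      nlinarith [sq_nonneg kh]
  -- Step 5 : assemble
  have hcard : Fintype.card (Fin n ⊕ Unit) = n + 1 := by simp
  have hmain := det_sq_le_pow_card C (((n : ℝ) + 1) * kh ^ 2) hcolbound
  rw [hcard, hCdet] at hmain
  -- hmain : (kh^2 * (d * -S))^2 ≤ ((n+1) * kh^2)^(n+1)
  set P : ℝ := ((n : ℝ) + 1) ^ (((n : ℝ) + 1) / 2) with hP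
  have hP0 : 0 ≤ P := Real.rpow_nonneg (by positivity) _
  have hPsq : P ^ 2 = ((n : ℝ) + 1) ^ (n + 1) := by
    have h1 : ((n : ℝ) + 1) = ((n + 1 : ℕ) : ℝ) := by push_cast; ring
    rw [hP, ← Real.rpow_natCast (((n : ℝ) + 1) ^ (((n : ℝ) + 1) / 2)) 2,
      ← Real.rpow_mul (by positivity),
      show (((n : ℝ) + 1) / 2 * ((2:ℕ):ℝ)) = ((n + 1 : ℕ) : ℝ) by push_cast; ring,
      Real.rpow_natCast, h1]
  have htarget_sq : (((d.natAbs : ℕ) : ℝ) * S) ^ 2 ≤ (kh ^ (n - 1) * P) ^ 2 := by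
    have hrw : (((d.natAbs : ℕ) : ℝ) * S) ^ 2 = (d : ℝ)^2 * S^2 := by
      have habs : ((d.natAbs : ℕ) : ℝ) = |(d:ℝ)| := by
        push_cast [Nat.cast_natAbs]
        ring
      rw [habs, mul_pow, sq_abs]
    have hrhs : (kh ^ (n - 1) * P) ^ 2 = kh ^ (2 * (n - 1)) * ((n:ℝ)+1)^(n+1) := by
      rw [mul_pow, hPsq, ← pow_mul, mul_comm (n-1) 2]
    rw [hrw, hrhs]
    have hexp : kh ^ 4 * (kh ^ (2 * (n - 1)) * ((n:ℝ)+1)^(n+1)) = (((n : ℝ) + 1) * kh ^ 2)^(n+1) := by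
      have h2 : kh ^ 4 * kh ^ (2 * (n - 1)) = kh ^ (2 * (n + 1)) := by
        rw [← pow_add]; congr 1; omega
      calc kh ^ 4 * (kh ^ (2 * (n - 1)) * ((n:ℝ)+1)^(n+1))
          = (kh ^ 4 * kh ^ (2 * (n - 1))) * ((n:ℝ)+1)^(n+1) := by ring
        _ = kh ^ (2 * (n + 1)) * ((n:ℝ)+1)^(n+1) := by rw [h2]
        _ = (((n : ℝ) + 1) * kh ^ 2)^(n+1) := by rw [mul_pow, ← pow_mul]; ring
    have hle : kh ^ 4 * ((d : ℝ)^2 * S^2) ≤ kh ^ 4 * (kh ^ (2 * (n - 1)) * ((n:ℝ)+1)^(n+1)) := by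
      rw [hexp]
      calc kh ^ 4 * ((d : ℝ)^2 * S^2) = (kh ^ 2 * ((d : ℝ) * -S))^2 := by ring
        _ ≤ (((n : ℝ) + 1) * kh ^ 2)^(n+1) := hmain
    exact le_of_mul_le_mul_left hle (by positivity)
  have htarget : ((d.natAbs : ℕ) : ℝ) * S ≤ kh ^ (n - 1) * P :=
    le_of_pow_le_pow_left₀ two_ne_zero
      (mul_nonneg (pow_nonneg hkh0.le _) hP0) htarget_sq
  calc (r : ℝ) * S ≤ ((d.natAbs : ℕ) : ℝ) * S := by
        apply mul_le_mul_of_nonneg_right _ hS0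
        exact_mod_cast hstep1
    _ ≤ kh ^ (n - 1) * P := htarget
end

section
/- For every real number ε > 0 and every natural number N, there exist an integer n ≥ N and an irreducible level matrix with entries in {0,1}, with n columns and m rows, such that m > exp((1 − ε)·√(n·ln n)). (In particular, ℓ(n,1) > e^{(1−ε)√(n ln n)} for infinitely many n.) -/
/-! ### Auxiliary construction

We build, for each `r ≥ 1`, an irreducible level 0/1-matrix with `2^r` rows and `2*r`
columns: the rows are indexed by `t ∈ Z/2^r`, and the columns come in pairs indexed by bit
positions `b < r`, the two columns of pair `b` recording bit `b` of `t` and of `t - 1 (mod 2^r)`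
respectively. -/

/-- Indicator (as `0` or `1`) of bit `b` of `u`. -/
def bitInd (b u : ℕ) : ℕ := if u.testBit b then 1 else 0

lemma bitInd_le_one (b u : ℕ) : bitInd b u ≤ 1 := by
  unfold bitInd; split <;> norm_num

lemma sum_range_double (n : ℕ) (g : ℕ → ℕ) :
    ∑ t ∈ Finset.range (2 * n), g t = ∑ u ∈ Finset.range n, (g (2 * u) + g (2 * u + 1)) := by
  induction n with
  | zero => simp
  | succ n ih =>
      have h : 2 * (n + 1) = (2 * n) + 1 + 1 := by ring
      rw [h, Finset.sum_range_succ, Finset.sum_range_succ, Finset.sum_range_succ, ih]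
      ring

/-- Among the numbers `0 ≤ u < 2^r`, exactly half have bit `b` set (for `b < r`). -/
lemma sum_bitInd_range {b r : ℕ} (h : b < r) :
    ∑ u ∈ Finset.range (2 ^ r), bitInd b u = 2 ^ (r - 1) := by
  induction b generalizing r with
  | zero =>
      obtain ⟨r', rfl⟩ : ∃ r', r = r' + 1 := ⟨r - 1, by omega⟩
      have h2 : (2:ℕ) ^ (r' + 1) = 2 * 2 ^ r' := by rw [pow_succ]; ring
      rw [h2, sum_range_double]
      have e : ∀ u : ℕ, bitInd 0 (2 * u) + bitInd 0 (2 * u + 1) = 1 := by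
        intro u
        unfold bitInd
        rw [Nat.testBit_zero, Nat.testBit_zero]
        simp [Nat.mul_mod_right, Nat.add_mod]
      calc ∑ u ∈ Finset.range (2 ^ r'), (bitInd 0 (2 * u) + bitInd 0 (2 * u + 1))
          = ∑ _u ∈ Finset.range (2 ^ r'), 1 := Finset.sum_congr rfl (fun u _ => e u)
        _ = 2 ^ r' := by simp
        _ = 2 ^ (r' + 1 - 1) := by simp
  | succ b ih =>
      obtain ⟨r', rfl⟩ : ∃ r', r = r' + 1 := ⟨r - 1, by omega⟩
      have hb : b < r' := by omega
      have h2 : (2:ℕ) ^ (r' + 1) = 2 * 2 ^ r' := by rw [pow_succ]; ring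
      rw [h2, sum_range_double]
      have e : ∀ u : ℕ, bitInd (b + 1) (2 * u) + bitInd (b + 1) (2 * u + 1)
          = 2 * bitInd b u := by
        intro u
        unfold bitInd
        rw [Nat.testBit_succ, Nat.testBit_succ]
        have e1 : 2 * u / 2 = u := by omega
        have e2 : (2 * u + 1) / 2 = u := by omega
        rw [e1, e2]
        split <;> norm_num
      calc ∑ u ∈ Finset.range (2 ^ r'), (bitInd (b+1) (2*u) + bitInd (b+1) (2*u+1))
          = ∑ u ∈ Finset.range (2 ^ r'), 2 * bitInd b u :=
            Finset.sum_congr rfl (fun u _ => e u)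
        _ = 2 * ∑ u ∈ Finset.range (2 ^ r'), bitInd b u := by rw [Finset.mul_sum]
        _ = 2 * 2 ^ (r' - 1) := by rw [ih hb]
        _ = 2 ^ (r' + 1 - 1) := by
            have h3 : r' - 1 + 1 = r' + 1 - 1 := by omega
            rw [← pow_succ', h3]

/-- Binary expansion: a number `u < 2^r` is the weighted sum of its bits. -/
lemma sum_bits_eq {r u : ℕ} (h : u < 2 ^ r) :
    ∑ b ∈ Finset.range r, 2 ^ b * bitInd b u = u := by
  induction r generalizing u with
  | zero => simp at h; simp [h]
  | succ r ih =>
      have hu2 : u / 2 < 2 ^ r := by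
        have h2 : (2:ℕ) ^ (r + 1) = 2 * 2 ^ r := by rw [pow_succ]; ring
        omega
      rw [Finset.sum_range_succ']
      have e : ∀ b : ℕ, 2 ^ (b + 1) * bitInd (b + 1) u = 2 * (2 ^ b * bitInd b (u / 2)) := by
        intro b
        unfold bitInd
        rw [Nat.testBit_succ]
        ring
      have e0 : 2 ^ 0 * bitInd 0 u = u % 2 := by
        unfold bitInd
        rw [Nat.testBit_zero]
        rcases Nat.mod_two_eq_zero_or_one u with h' | h' <;> simp [h']
      calc (∑ b ∈ Finset.range r, 2 ^ (b+1) * bitInd (b+1) u) + 2 ^ 0 * bitInd 0 u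
          = (∑ b ∈ Finset.range r, 2 * (2 ^ b * bitInd b (u / 2))) + u % 2 := by
            rw [e0]
            congr 1
            exact Finset.sum_congr rfl (fun b _ => e b)
        _ = 2 * (∑ b ∈ Finset.range r, 2 ^ b * bitInd b (u / 2)) + u % 2 := by
            rw [Finset.mul_sum]
        _ = 2 * (u / 2) + u % 2 := by rw [ih hu2]
        _ = u := Nat.div_add_mod u 2

/-- The matrix: rows are `t ∈ Fin (2^r)`; column `j` records bit `j/2` of
`t - (j % 2)  (mod 2^r)`. -/
def Mat (r : ℕ) : Matrix (Fin (2 ^ r)) (Fin (2 * r)) ℕ :=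
  fun t j => bitInd (j.val / 2) ((t.val + (2 ^ r - j.val % 2)) % 2 ^ r)

lemma Mat_apply (r : ℕ) (t : Fin (2 ^ r)) (j : Fin (2 * r)) :
    Mat r t j = bitInd (j.val / 2) ((t.val + (2 ^ r - j.val % 2)) % 2 ^ r) := rfl

/-- Every column of `Mat r` sums to `2^(r-1)`. -/
lemma Mat_colsum (r : ℕ) (j : Fin (2 * r)) :
    ∑ t : Fin (2 ^ r), Mat r t j = 2 ^ (r - 1) := by
  have hN : 0 < 2 ^ r := Nat.pow_pos (by norm_num)
  have hb : j.val / 2 < r := by have := j.isLt; omega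
  have hs : j.val % 2 ≤ 2 ^ r := by
    have : j.val % 2 < 2 := Nat.mod_lt _ (by norm_num)
    omega
  unfold Mat
  rw [Fin.sum_univ_eq_sum_range (fun u => bitInd (j.val / 2) ((u + (2 ^ r - j.val % 2)) % 2 ^ r))]
  have hbij : ∑ t ∈ Finset.range (2 ^ r), bitInd (j.val / 2) ((t + (2 ^ r - j.val % 2)) % 2 ^ r)
      = ∑ u ∈ Finset.range (2 ^ r), bitInd (j.val / 2) u := by
    apply Finset.sum_nbij' (i := fun t => (t + (2 ^ r - j.val % 2)) % 2 ^ r)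
      (j := fun u => (u + j.val % 2) % 2 ^ r)
    · intro a ha
      exact Finset.mem_range.mpr (Nat.mod_lt _ hN)
    · intro a ha
      exact Finset.mem_range.mpr (Nat.mod_lt _ hN)
    · intro a ha
      have ha' : a < 2 ^ r := Finset.mem_range.mp ha
      rw [Nat.mod_add_mod]
      have e : a + (2 ^ r - j.val % 2) + j.val % 2 = a + 2 ^ r := by omega
      rw [e, Nat.add_mod_right, Nat.mod_eq_of_lt ha']
    · intro a ha
      have ha' : a < 2 ^ r := Finset.mem_range.mp ha
      rw [Nat.mod_add_mod]
      have e : a + j.val % 2 + (2 ^ r - j.val % 2) = a + 2 ^ r := by omega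
      rw [e, Nat.add_mod_right, Nat.mod_eq_of_lt ha']
    · intro a ha
      rfl
  rw [hbij]
  exact sum_bitInd_range hb

/-- The matrix `Mat r` is irreducible (for `r ≥ 1`). -/
lemma Mat_isIrred {r : ℕ} (_hr : 1 ≤ r) : IsIrred (Mat r) := by
  have hN : 0 < 2 ^ r := Nat.pow_pos (by norm_num)
  constructor
  · intro j j'
    rw [Mat_colsum, Mat_colsum]
  · rintro ⟨S, hne, hSu, hcol⟩
    -- the two columns of pair b
    have hj0 : ∀ b, b < r → 2 * b < 2 * r := by omega
    have hj1 : ∀ b, b < r → 2 * b + 1 < 2 * r := by omega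
    -- Evaluate the matrix on these columns
    have hM0 : ∀ (b : ℕ) (hb : b < r) (i : Fin (2 ^ r)),
        Mat r i ⟨2 * b, hj0 b hb⟩ = bitInd b i.val := by
      intro b hb i
      rw [Mat_apply]
      have e1 : (2 * b) % 2 = 0 := Nat.mul_mod_right 2 b
      have e2 : (2 * b) / 2 = b := by omega
      rw [e1, e2, Nat.sub_zero, Nat.add_mod_right, Nat.mod_eq_of_lt i.isLt]
    have hM1 : ∀ (b : ℕ) (hb : b < r) (i : Fin (2 ^ r)),
        Mat r i ⟨2 * b + 1, hj1 b hb⟩ = bitInd b ((i.val + (2 ^ r - 1)) % 2 ^ r) := by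
      intro b hb i
      rw [Mat_apply]
      have e1 : (2 * b + 1) % 2 = 1 := by omega
      have e2 : (2 * b + 1) / 2 = b := by omega
      rw [e1, e2]
    -- the key equality of the two weighted sums
    have hAA : ∀ b, b < r →
        (∑ i ∈ S, bitInd b i.val) = ∑ i ∈ S, bitInd b ((i.val + (2 ^ r - 1)) % 2 ^ r) := by
      intro b hb
      have := hcol ⟨2 * b, hj0 b hb⟩ ⟨2 * b + 1, hj1 b hb⟩
      calc (∑ i ∈ S, bitInd b i.val) = ∑ i ∈ S, Mat r i ⟨2 * b, hj0 b hb⟩ :=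
            Finset.sum_congr rfl (fun i _ => (hM0 b hb i).symm)
        _ = ∑ i ∈ S, Mat r i ⟨2 * b + 1, hj1 b hb⟩ := this
        _ = ∑ i ∈ S, bitInd b ((i.val + (2 ^ r - 1)) % 2 ^ r) :=
            Finset.sum_congr rfl (fun i _ => hM1 b hb i)
    -- reconstruct the row sums from bits
    have hsum1 : (∑ i ∈ S, i.val) = ∑ b ∈ Finset.range r, 2 ^ b * (∑ i ∈ S, bitInd b i.val) := by
      calc (∑ i ∈ S, i.val) = ∑ i ∈ S, ∑ b ∈ Finset.range r, 2 ^ b * bitInd b i.val :=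
            Finset.sum_congr rfl (fun i _ => (sum_bits_eq i.isLt).symm)
        _ = ∑ b ∈ Finset.range r, ∑ i ∈ S, 2 ^ b * bitInd b i.val := Finset.sum_comm
        _ = ∑ b ∈ Finset.range r, 2 ^ b * (∑ i ∈ S, bitInd b i.val) := by
            exact Finset.sum_congr rfl (fun b _ => (Finset.mul_sum _ _ _).symm)
    have hsum2 : (∑ i ∈ S, (i.val + (2 ^ r - 1)) % 2 ^ r)
        = ∑ b ∈ Finset.range r, 2 ^ b * (∑ i ∈ S, bitInd b ((i.val + (2 ^ r - 1)) % 2 ^ r)) := by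
      calc (∑ i ∈ S, (i.val + (2 ^ r - 1)) % 2 ^ r)
          = ∑ i ∈ S, ∑ b ∈ Finset.range r, 2 ^ b * bitInd b ((i.val + (2 ^ r - 1)) % 2 ^ r) :=
            Finset.sum_congr rfl (fun i _ => (sum_bits_eq (Nat.mod_lt _ hN)).symm)
        _ = ∑ b ∈ Finset.range r, ∑ i ∈ S, 2 ^ b * bitInd b ((i.val + (2 ^ r - 1)) % 2 ^ r) :=
            Finset.sum_comm
        _ = ∑ b ∈ Finset.range r, 2 ^ b
              * (∑ i ∈ S, bitInd b ((i.val + (2 ^ r - 1)) % 2 ^ r)) := by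
            exact Finset.sum_congr rfl (fun b _ => (Finset.mul_sum _ _ _).symm)
    have heq : (∑ i ∈ S, i.val) = ∑ i ∈ S, (i.val + (2 ^ r - 1)) % 2 ^ r := by
      rw [hsum1, hsum2]
      exact Finset.sum_congr rfl (fun b hb => by rw [hAA b (Finset.mem_range.mp hb)])
    -- pointwise identity over ℤ
    set z : Fin (2 ^ r) := ⟨0, hN⟩ with hz
    have hzval : z.val = 0 := by rw [hz]
    have hpt : ∀ i : Fin (2 ^ r),
        (((i.val + (2 ^ r - 1)) % 2 ^ r : ℕ) : ℤ)
          = (i.val : ℤ) - 1 + (if i = z then ((2 ^ r : ℕ) : ℤ) else 0) := by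
      intro i
      by_cases h0 : i = z
      · rw [h0, if_pos rfl, hzval]
        have e : ((0 : ℕ) + (2 ^ r - 1)) % 2 ^ r = 2 ^ r - 1 := by
          rw [Nat.zero_add, Nat.mod_eq_of_lt (by omega)]
        rw [e]
        have e2 : ((2 ^ r - 1 : ℕ) : ℤ) = ((2 ^ r : ℕ) : ℤ) - 1 := by
          rw [Nat.cast_sub (by omega)]; norm_num
        rw [e2]; push_cast; ring
      · have hv : 1 ≤ i.val := by
          rcases Nat.eq_zero_or_pos i.val with h' | h'
          · exact absurd (Fin.ext (h'.trans hzval.symm)) h0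
          · exact h'
        have e : i.val + (2 ^ r - 1) = (i.val - 1) + 2 ^ r := by omega
        have e2 : (i.val + (2 ^ r - 1)) % 2 ^ r = i.val - 1 := by
          rw [e, Nat.add_mod_right, Nat.mod_eq_of_lt (by have := i.isLt; omega)]
        rw [e2, if_neg h0]
        have e3 : ((i.val - 1 : ℕ) : ℤ) = (i.val : ℤ) - 1 := by
          rw [Nat.cast_sub hv]; norm_num
        rw [e3]; ring
    -- sum the pointwise identity
    have hint : ((∑ i ∈ S, i.val : ℕ) : ℤ)
        = ((∑ i ∈ S, i.val : ℕ) : ℤ) - S.card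
            + (if z ∈ S then ((2 ^ r : ℕ) : ℤ) else 0) := by
      calc ((∑ i ∈ S, i.val : ℕ) : ℤ)
          = ((∑ i ∈ S, (i.val + (2 ^ r - 1)) % 2 ^ r : ℕ) : ℤ) := by
            exact_mod_cast congrArg (Nat.cast : ℕ → ℤ) heq
        _ = ∑ i ∈ S, (((i.val + (2 ^ r - 1)) % 2 ^ r : ℕ) : ℤ) := Nat.cast_sum _ _
        _ = ∑ i ∈ S, ((i.val : ℤ) - 1 + (if i = z then ((2 ^ r : ℕ) : ℤ) else 0)) :=
            Finset.sum_congr rfl (fun i _ => hpt i)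
        _ = (∑ i ∈ S, ((i.val : ℤ) - 1))
              + ∑ i ∈ S, (if i = z then ((2 ^ r : ℕ) : ℤ) else 0) :=
            Finset.sum_add_distrib
        _ = ((∑ i ∈ S, (i.val : ℤ)) - S.card)
              + (if z ∈ S then ((2 ^ r : ℕ) : ℤ) else 0) := by
            rw [Finset.sum_sub_distrib, Finset.sum_const, Finset.sum_ite_eq' S z]
            simp
        _ = ((∑ i ∈ S, i.val : ℕ) : ℤ) - S.card
              + (if z ∈ S then ((2 ^ r : ℕ) : ℤ) else 0) := by
            rw [Nat.cast_sum]
    have hcard : (S.card : ℤ) = if z ∈ S then ((2 ^ r : ℕ) : ℤ) else 0 := by linarith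
    by_cases hzS : z ∈ S
    · rw [if_pos hzS] at hcard
      have : S.card = 2 ^ r := by exact_mod_cast hcard
      have : S = Finset.univ := by
        apply Finset.eq_univ_of_card
        rw [this, Fintype.card_fin]
      exact hSu this
    · rw [if_neg hzS] at hcard
      have : S.card = 0 := by exact_mod_cast hcard
      have : S = ∅ := Finset.card_eq_zero.mp this
      exact hne.ne_empty this

/-- The analytic estimate: for `r ≥ 200`, `√(2r·log(2r)) < r·log 2`. -/
lemma sqrt_bound {r : ℕ} (hr : 200 ≤ r) :
    Real.sqrt ((2 * r : ℝ) * Real.log (2 * r)) < (r : ℝ) * Real.log 2 := by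
  have hR : (200 : ℝ) ≤ (r : ℝ) := by exact_mod_cast hr
  have hx : (0 : ℝ) < 2 * (r : ℝ) := by linarith
  have hlog2 : (0.6931 : ℝ) ≤ Real.log 2 := by
    have := Real.log_two_gt_d9
    linarith
  have hrl2 : (0 : ℝ) < (r : ℝ) * Real.log 2 := by
    apply mul_pos (by linarith) (by linarith)
  rw [show Real.sqrt ((2 * (r : ℝ)) * Real.log (2 * (r : ℝ)))
      < (r : ℝ) * Real.log 2 ↔ (2 * (r : ℝ)) * Real.log (2 * (r : ℝ))
      < ((r : ℝ) * Real.log 2) ^ 2 from Real.sqrt_lt' hrl2]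
  -- log x ≤ 2 √x
  have hlogx : Real.log (2 * (r : ℝ)) ≤ 2 * Real.sqrt (2 * (r : ℝ)) := by
    have h1 : Real.log (Real.sqrt (2 * (r : ℝ))) ≤ Real.sqrt (2 * (r : ℝ)) - 1 :=
      Real.log_le_sub_one_of_pos (Real.sqrt_pos.mpr hx)
    have h2 : Real.log (2 * (r : ℝ)) = 2 * Real.log (Real.sqrt (2 * (r : ℝ))) := by
      rw [Real.log_sqrt hx.le]; ring
    linarith
  have hsplit : Real.sqrt (2 * (r : ℝ)) = Real.sqrt 2 * Real.sqrt (r : ℝ) :=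
    Real.sqrt_mul (by norm_num) _
  have hsqrt2 : Real.sqrt 2 ≤ 1.41422 := by
    rw [show (1.41422 : ℝ) = Real.sqrt (1.41422 ^ 2) from
      (Real.sqrt_sq (by norm_num)).symm]
    apply Real.sqrt_le_sqrt
    norm_num
  have hsqrtR : (14.142 : ℝ) ≤ Real.sqrt (r : ℝ) := by
    rw [show (14.142 : ℝ) = Real.sqrt (14.142 ^ 2) from
      (Real.sqrt_sq (by norm_num)).symm]
    apply Real.sqrt_le_sqrt
    nlinarith
  have hsq : Real.sqrt (r : ℝ) ^ 2 = (r : ℝ) := Real.sq_sqrt (by linarith)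
  have hsnn : (0 : ℝ) ≤ Real.sqrt (r : ℝ) := Real.sqrt_nonneg _
  have h2nn : (0 : ℝ) ≤ Real.sqrt 2 := Real.sqrt_nonneg _
  -- main chain
  have step1 : (2 * (r : ℝ)) * Real.log (2 * (r : ℝ))
      ≤ (2 * (r : ℝ)) * (2 * (Real.sqrt 2 * Real.sqrt (r : ℝ))) := by
    apply mul_le_mul_of_nonneg_left _ hx.le
    rw [← hsplit]
    exact hlogx
  have hRpos : (0 : ℝ) < (r : ℝ) := by linarith
  have hL2 : (0.48 : ℝ) ≤ Real.log 2 ^ 2 := by nlinarith [hlog2]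
  have key0 : 4 * Real.sqrt 2 < Real.log 2 ^ 2 * Real.sqrt (r : ℝ) := by
    calc 4 * Real.sqrt 2 ≤ 4 * 1.41422 := by linarith
      _ < 0.48 * 14.142 := by norm_num
      _ ≤ Real.log 2 ^ 2 * Real.sqrt (r : ℝ) :=
          mul_le_mul hL2 hsqrtR (by norm_num) (by positivity)
  have step2 : (2 * (r : ℝ)) * (2 * (Real.sqrt 2 * Real.sqrt (r : ℝ)))
      < ((r : ℝ) * Real.log 2) ^ 2 := by
    have h' : (4 * Real.sqrt 2) * (Real.sqrt (r : ℝ) * (r : ℝ))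
        < (Real.log 2 ^ 2 * Real.sqrt (r : ℝ)) * (Real.sqrt (r : ℝ) * (r : ℝ)) := by
      apply mul_lt_mul_of_pos_right key0
      apply mul_pos (Real.sqrt_pos.mpr hRpos) hRpos
    have hss : Real.sqrt (r : ℝ) * Real.sqrt (r : ℝ) = (r : ℝ) :=
      Real.mul_self_sqrt hRpos.le
    calc (2 * (r : ℝ)) * (2 * (Real.sqrt 2 * Real.sqrt (r : ℝ)))
        = (4 * Real.sqrt 2) * (Real.sqrt (r : ℝ) * (r : ℝ)) := by ring
      _ < (Real.log 2 ^ 2 * Real.sqrt (r : ℝ)) * (Real.sqrt (r : ℝ) * (r : ℝ)) := h'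
      _ = Real.log 2 ^ 2 * (Real.sqrt (r : ℝ) * Real.sqrt (r : ℝ)) * (r : ℝ) := by ring
      _ = Real.log 2 ^ 2 * (r : ℝ) * (r : ℝ) := by rw [hss]
      _ = ((r : ℝ) * Real.log 2) ^ 2 := by ring
  linarith

/-- For every `ε > 0` and every `N`, there is an `n ≥ N` and an irreducible level `1`-matrix
with `n` columns and `m > exp((1 − ε)·√(n·ln n))` rows. -/
theorem lower_bound (ε : ℝ) (hε : 0 < ε) (N : ℕ) :
    ∃ n : ℕ, N ≤ n ∧ ∃ m : ℕ, ∃ M : Matrix (Fin m) (Fin n) ℕ,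
      (∀ i j, M i j ≤ 1) ∧ IsIrred M ∧
      (m : ℝ) > Real.exp ((1 - ε) * Real.sqrt ((n : ℝ) * Real.log (n : ℝ))) := by
  set r : ℕ := max 200 N with hrdef
  have hr200 : 200 ≤ r := le_max_left _ _
  have hrN : N ≤ r := le_max_right _ _
  refine ⟨2 * r, by omega, 2 ^ r, Mat r, ?_, Mat_isIrred (by omega), ?_⟩
  · intro i j
    exact bitInd_le_one _ _
  · -- the analytic bound
    have hcast1 : ((2 * r : ℕ) : ℝ) = 2 * (r : ℝ) := by push_cast; ring
    have key : Real.sqrt (((2 * r : ℕ) : ℝ) * Real.log ((2 * r : ℕ) : ℝ))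
        < (r : ℝ) * Real.log 2 := by
      rw [hcast1]
      exact sqrt_bound hr200
    have h1 : (1 - ε) * Real.sqrt (((2 * r : ℕ) : ℝ) * Real.log ((2 * r : ℕ) : ℝ))
        ≤ Real.sqrt (((2 * r : ℕ) : ℝ) * Real.log ((2 * r : ℕ) : ℝ)) :=
      mul_le_of_le_one_left (Real.sqrt_nonneg _) (by linarith)
    have h2 : (1 - ε) * Real.sqrt (((2 * r : ℕ) : ℝ) * Real.log ((2 * r : ℕ) : ℝ))
        < (r : ℝ) * Real.log 2 := lt_of_le_of_lt h1 key
    have h3 : Real.exp ((1 - ε) * Real.sqrt (((2 * r : ℕ) : ℝ) * Real.log ((2 * r : ℕ) : ℝ)))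
        < Real.exp ((r : ℝ) * Real.log 2) := Real.exp_lt_exp.mpr h2
    have h4 : Real.exp ((r : ℝ) * Real.log 2) = ((2 ^ r : ℕ) : ℝ) := by
      rw [Real.exp_nat_mul, Real.exp_log (by norm_num : (0:ℝ) < 2)]
      push_cast
      ring
    rw [gt_iff_lt]
    calc Real.exp ((1 - ε) * Real.sqrt (((2 * r : ℕ) : ℝ) * Real.log ((2 * r : ℕ) : ℝ)))
        < Real.exp ((r : ℝ) * Real.log 2) := h3
      _ = ((2 ^ r : ℕ) : ℝ) := h4
end

section
/- Let p_1 < p_2 < ⋯ < p_t be distinct primes (t ≥ 1), let P = p_1·p_2⋯p_t, and set r_i = p_i + 1 and n = r_1 + ⋯ + r_t. Index the columns by pairs (i, j) with 1 ≤ i ≤ t and 1 ≤ j ≤ r_i, and index the rows by triples (i, c, j) with 1 ≤ i ≤ t, 1 ≤ c ≤ P/p_i, and 1 ≤ j ≤ r_i. Let A* be the 0/1 matrix whose row (i, c, j) has entry 1 in column (i', j') if and only if i' = i and j' ≠ j, and entry 0 otherwise (i.e., for each i, it stacks P/p_i copies of each row of the r_i × r_i matrix J_{r_i} having 0's on the diagonal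 and 1's elsewhere, in block-diagonal column positions). Then A* is a level matrix with every column sum equal to P, it has m = Σ_{i=1}^t (P/p_i)(p_i + 1) rows and n columns, and A* is irreducible. -/
/-- A matrix (over arbitrary finite index types) with nonnegative integer entries is *level* if
all of its column sums are equal. -/
def IsLevelG {α β : Type*} [Fintype α] (M : Matrix α β ℕ) : Prop :=
  ∀ j j' : β, ∑ i, M i j = ∑ i, M i j'

/-- A level matrix is *reducible* if there is a nonempty proper subset of its row indices whose
corresponding submatrix (keeping all columns) is level. -/
def IsReducibleG {α β : Type*} [Fintype α] (M : Matrix α β ℕ) : Prop :=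
  ∃ S : Finset α, S.Nonempty ∧ S ≠ Finset.univ ∧
    ∀ j j' : β, ∑ i ∈ S, M i j = ∑ i ∈ S, M i j'

/-- A level matrix is *irreducible* if it is level and not reducible. -/
def IsIrredG {α β : Type*} [Fintype α] (M : Matrix α β ℕ) : Prop :=
  IsLevelG M ∧ ¬ IsReducibleG M

lemma fin_sum_eq {n : ℕ} (a : Fin n) :
    ∑ b : Fin n, (if (a:ℕ) = (b:ℕ) then 1 else 0) = 1 := by
  simp_rw [Fin.val_eq_val]; simp

lemma fin_sum_ne {n : ℕ} (a : Fin n) :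
    ∑ b : Fin n, (if (a:ℕ) ≠ (b:ℕ) then 1 else 0) = n - 1 := by
  have h1 : ∑ b : Fin n, ((if (a:ℕ) ≠ (b:ℕ) then 1 else 0) + (if (a:ℕ) = (b:ℕ) then 1 else 0)) = n := by
    have h : ∀ b : Fin n, ((if (a:ℕ) ≠ (b:ℕ) then 1 else 0) + (if (a:ℕ) = (b:ℕ) then 1 else 0)) = 1 := by
      intro b; by_cases h : (a:ℕ) = (b:ℕ) <;> simp [h]
    simp_rw [h]; simp
  rw [Finset.sum_add_distrib] at h1
  have h2 := fin_sum_eq a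
  omega

lemma sigma_sum {ι : Type} [Fintype ι] (f : ι → Type) [∀ i, Fintype (f i)] (g : (Σ i, f i) → ℕ) :
    ∑ x : Σ i, f i, g x = ∑ i, ∑ y : f i, g ⟨i, y⟩ := by
  rw [← Finset.univ_sigma_univ, Finset.sum_sigma]

/-- For distinct primes `p 0 < p 1 < ⋯ < p (t-1)` with product `P`, the matrix `A*` obtained by
stacking, for each `i`, `P / p i` copies of each row of the `(p i + 1) × (p i + 1)` matrix
`J_{p i + 1}` (zeros on the diagonal, ones elsewhere) in block-diagonal column positions is a
level matrix with all column sums equal to `P`; it has `∑ i, (P / p i) * (p i + 1)` rows and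
`∑ i, (p i + 1)` columns, and it is irreducible. -/
theorem block_prime_matrix_irreducible (t : ℕ) (ht : 1 ≤ t)
    (p : Fin t → ℕ) (hp : ∀ i, (p i).Prime) (hmono : StrictMono p)
    (P : ℕ) (hP : P = ∏ i, p i) :
    let Astar : Matrix ((i : Fin t) × (Fin (P / p i) × Fin (p i + 1)))
        ((i : Fin t) × Fin (p i + 1)) ℕ :=
      fun r c => if c.1 = r.1 ∧ (c.2 : ℕ) ≠ (r.2.2 : ℕ) then 1 else 0
    (∀ c, ∑ r, Astar r c = P) ∧
    Fintype.card ((i : Fin t) × (Fin (P / p i) × Fin (p i + 1)))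
      = ∑ i, (P / p i) * (p i + 1) ∧
    Fintype.card ((i : Fin t) × Fin (p i + 1)) = ∑ i, (p i + 1) ∧
    IsIrredG Astar := by
  intro Astar
  have hA : ∀ r c, Astar r c = if c.1 = r.1 ∧ (c.2 : ℕ) ≠ (r.2.2 : ℕ) then 1 else 0 :=
    fun _ _ => rfl
  have hdvd : ∀ i, p i ∣ P := fun i => hP ▸ Finset.dvd_prod_of_mem p (Finset.mem_univ i)
  have hppos : ∀ i, 0 < p i := fun i => (hp i).pos
  -- column sums are all P
  have hcol : ∀ c, ∑ r, Astar r c = P := by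
    rintro ⟨i, j⟩
    rw [sigma_sum]
    simp_rw [hA, Fintype.sum_prod_type]
    have hkey : ∀ i', (∑ c : Fin (P / p i'), ∑ j' : Fin (p i' + 1),
        if i = i' ∧ (j:ℕ) ≠ (j':ℕ) then 1 else 0) = if i' = i then (P / p i) * (p i) else 0 := by
      intro i'
      by_cases h : i' = i
      · subst h
        simp_rw [true_and]
        simp only [fin_sum_ne j, Finset.sum_const, Finset.card_univ, Fintype.card_fin, smul_eq_mul]
        simp
      · have h2 : i ≠ i' := fun hh => h hh.symm
        simp [h, h2]
    simp_rw [hkey]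
    simp only [Finset.sum_ite_eq', Finset.mem_univ, if_true]
    exact Nat.div_mul_cancel (hdvd i)
  refine ⟨hcol, by simp, by simp, ⟨fun c c' => by rw [hcol c, hcol c'], ?_⟩⟩
  rintro ⟨S, hSne, hSuniv, hlev⟩
  classical
  set F : Fin t → ℕ → ℕ := fun i v => ∑ r ∈ S, if r.1 = i ∧ (r.2.2:ℕ) = v then 1 else 0 with hF
  set T : Fin t → ℕ := fun i => ∑ r ∈ S, if r.1 = i then 1 else 0 with hT
  -- column sum over S plus F equals T
  have key1 : ∀ (i : Fin t) (j : Fin (p i + 1)),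
      (∑ r ∈ S, Astar r ⟨i, j⟩) + F i j = T i := by
    intro i j
    rw [hF, hT, ← Finset.sum_add_distrib]
    refine Finset.sum_congr rfl ?_
    rintro ⟨i', c, j'⟩ _
    simp only [hA]
    by_cases h : i' = i
    · subst h
      by_cases h2 : (j:ℕ) = (j':ℕ)
      · simp [h2]
      · simp [h2, (Ne.symm h2 : (j':ℕ) ≠ (j:ℕ))]
    · have h2 : i ≠ i' := fun hh => h hh.symm
      simp [h, h2]
  have key2 : ∀ (i : Fin t) (j j' : Fin (p i + 1)), F i j = F i j' := by
    intro i j j'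
    have h := hlev ⟨i, j⟩ ⟨i, j'⟩
    have k1 := key1 i j
    have k2 := key1 i j'
    omega
  set s : Fin t → ℕ := fun i => F i 0 with hs
  have key2' : ∀ (i : Fin t) (j : Fin (p i + 1)), F i (j:ℕ) = s i := by
    intro i j
    have := key2 i j (0 : Fin (p i + 1))
    simpa using this
  have T_eq : ∀ i, T i = (p i + 1) * s i := by
    intro i
    have h1 : T i = ∑ j : Fin (p i + 1), F i (j:ℕ) := by
      rw [hT, hF]
      rw [Finset.sum_comm]
      refine Finset.sum_congr rfl ?_
      rintro ⟨i', c, j'⟩ _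
      by_cases h : i' = i
      · subst h
        simp only [true_and, if_true]
        exact (fin_sum_eq j').symm
      · have h2 : (⟨i', c, j'⟩ : (i : Fin t) × (Fin (P / p i) × Fin (p i + 1))).1 ≠ i := h
        simp [h]
    rw [h1]
    simp_rw [key2']
    simp [mul_comm]
  have colS_eq : ∀ (i : Fin t) (j : Fin (p i + 1)),
      (∑ r ∈ S, Astar r ⟨i, j⟩) = p i * s i := by
    intro i j
    have k1 := key1 i j
    have k2 := key2' i j
    rw [T_eq] at k1
    have : (p i + 1) * s i = p i * s i + s i := by ring
    omega
  set i0 : Fin t := ⟨0, ht⟩ with hi0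
  set K : ℕ := p i0 * s i0 with hK
  have cross : ∀ i, p i * s i = K := by
    intro i
    have h := hlev ⟨i, 0⟩ ⟨i0, 0⟩
    rw [colS_eq, colS_eq] at h
    exact h
  have hKdvd : ∀ i, p i ∣ K := fun i => ⟨s i, (cross i).symm⟩
  have hPK : P ∣ K := by
    have hPim : P = ∏ q ∈ Finset.univ.image p, q := by
      rw [hP, Finset.prod_image (fun a _ b _ h => hmono.injective h)]
    rw [hPim]
    refine Finset.prod_primes_dvd K ?_ ?_
    · intro q hq
      obtain ⟨i, _, rfl⟩ := Finset.mem_image.mp hq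
      exact (hp i).prime
    · intro q hq
      obtain ⟨i, _, rfl⟩ := Finset.mem_image.mp hq
      exact hKdvd i
  have s_le : ∀ i, s i ≤ P / p i := by
    intro i
    have h1 : s i ≤ ∑ r : (i : Fin t) × (Fin (P / p i) × Fin (p i + 1)),
        (if r.1 = i ∧ (r.2.2:ℕ) = 0 then 1 else 0) := by
      rw [hs, hF]
      exact Finset.sum_le_sum_of_subset (Finset.subset_univ S)
    have h2 : ∑ r : (i : Fin t) × (Fin (P / p i) × Fin (p i + 1)),
        (if r.1 = i ∧ (r.2.2:ℕ) = 0 then 1 else 0) = P / p i := by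
      rw [sigma_sum]
      simp_rw [Fintype.sum_prod_type]
      have hkey : ∀ i', (∑ c : Fin (P / p i'), ∑ j' : Fin (p i' + 1),
          if i' = i ∧ (j':ℕ) = 0 then 1 else 0) = if i' = i then P / p i' else 0 := by
        intro i'
        by_cases h : i' = i
        · subst h
          simp_rw [true_and,
            show ∀ j' : Fin (p i' + 1), ((j':ℕ) = 0 ↔ j' = (0 : Fin (p i' + 1))) from
              fun j' => ⟨fun h => Fin.ext h, fun h => by simp [h]⟩]
          simp
        · simp [h]
      simp_rw [hkey]
      simp
    omega
  have hK_le : K ≤ P := by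
    calc K = p i0 * s i0 := rfl
      _ ≤ p i0 * (P / p i0) := Nat.mul_le_mul_left _ (s_le i0)
      _ = P := Nat.mul_div_cancel' (hdvd i0)
  have hKcases : K = 0 ∨ K = P := by
    rcases Nat.eq_zero_or_pos K with h | h
    · exact Or.inl h
    · exact Or.inr (le_antisymm hK_le (Nat.le_of_dvd h hPK))
  -- total count of rows in block i
  have hTu : ∀ i : Fin t, ∑ r : (i : Fin t) × (Fin (P / p i) × Fin (p i + 1)),
      (if r.1 = i then (1:ℕ) else 0) = (P / p i) * (p i + 1) := by
    intro i
    rw [sigma_sum]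
    simp_rw [Fintype.sum_prod_type]
    have hkey : ∀ i', (∑ c : Fin (P / p i'), ∑ j' : Fin (p i' + 1),
        if i' = i then (1:ℕ) else 0) = if i' = i then (P / p i') * (p i' + 1) else 0 := by
      intro i'
      by_cases h : i' = i <;> simp [h, mul_comm]
    simp_rw [hkey]
    simp
  rcases hKcases with h0 | hPeq
  · -- K = 0 : S is empty, contradiction
    have hs0 : ∀ i, s i = 0 := by
      intro i
      have h := cross i
      rw [h0] at h
      exact (Nat.mul_eq_zero.mp h).resolve_left (hppos i).ne'
    obtain ⟨r, hr⟩ := hSne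
    have hT0 : T r.1 = 0 := by rw [T_eq, hs0, mul_zero]
    rw [hT] at hT0
    have := (Finset.sum_eq_zero_iff.mp hT0) r hr
    simp at this
  · -- K = P : S is everything, contradiction
    apply hSuniv
    apply Finset.eq_univ_iff_forall.mpr
    intro r
    by_contra hr
    have hsi : ∀ i, s i = P / p i := by
      intro i
      have h := cross i
      rw [hPeq] at h
      have h2 : p i * (P / p i) = P := Nat.mul_div_cancel' (hdvd i)
      exact Nat.eq_of_mul_eq_mul_left (hppos i) (h.trans h2.symm)
    have hTv : T r.1 = (p r.1 + 1) * (P / p r.1) := by rw [T_eq, hsi]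
    have hsub : S ⊆ Finset.univ.erase r := by
      intro x hx
      exact Finset.mem_erase.mpr ⟨fun h => hr (h ▸ hx), Finset.mem_univ x⟩
    have hle : T r.1 ≤ ∑ r' ∈ Finset.univ.erase r, (if r'.1 = r.1 then (1:ℕ) else 0) := by
      rw [hT]
      exact Finset.sum_le_sum_of_subset hsub
    have hadd : (if r.1 = r.1 then (1:ℕ) else 0)
        + ∑ r' ∈ Finset.univ.erase r, (if r'.1 = r.1 then (1:ℕ) else 0)
        = ∑ r' : (i : Fin t) × (Fin (P / p i) × Fin (p i + 1)),
            (if r'.1 = r.1 then (1:ℕ) else 0) :=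
      Finset.add_sum_erase _ (fun r' => if r'.1 = r.1 then (1:ℕ) else 0) (Finset.mem_univ r)
    rw [if_pos rfl, hTu r.1] at hadd
    have hmc : (p r.1 + 1) * (P / p r.1) = (P / p r.1) * (p r.1 + 1) := mul_comm _ _
    omega
end
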